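/- arXiv:2604.25153 — 3 statements merged into one kernel-verified Lean document; each statement's English description precedes it below -/
import Mathlib

section
/- Let X be a nonempty set and let f, g : X → ℝ be bounded functions. Let (t_n) be a sequence of positive real numbers with t_n → 0, and let (g_n) be a sequence of bounded functions g_n : X → ℝ with sup_{x∈X}|g_n(x) − g(x)| → 0. Then (inf_{x∈X}(f(x) + t_n·g_n(x)) − inf_{x∈X} f(x)) / t_n converges to sup_{ε>0} inf_{x ∈ S_f^ε} g(x). That is, the infimum functional ι on bounded functions is Hadamard directionally differentiable at f with directional derivative ι'_f(g) = lim_{ε↓0} inf_{x ∈ S_f^ε} g(x) = sup_{ε>0} inf_{x ∈ S_f^ε} g(x). -/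
open Filter Topology

/-- Hadamard directional differentiability of the infimum functional on bounded
functions: for positive `t n → 0` and bounded `g n` with `sup_x |g n x - g x| → 0`,
the difference quotients of the infimum converge to
`sup_{ε>0} inf_{x ∈ S_f^ε} g(x)`. -/
theorem infimum_hadamard_directional_derivative {X : Type*} [Nonempty X]
    (f g : X → ℝ) (hf : ∃ C, ∀ x, |f x| ≤ C) (hg : ∃ C, ∀ x, |g x| ≤ C)
    (t : ℕ → ℝ) (ht : ∀ n, 0 < t n) (ht0 : Tendsto t atTop (𝓝 0))
    (gseq : ℕ → X → ℝ) (hgseq : ∀ n, ∃ C, ∀ x, |gseq n x| ≤ C)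
    (hconv : Tendsto (fun n => ⨆ x, |gseq n x - g x|) atTop (𝓝 0)) :
    Tendsto (fun n => ((⨅ x, (f x + t n * gseq n x)) - ⨅ x, f x) / t n) atTop
      (𝓝 (⨆ ε : Set.Ioi (0 : ℝ), sInf (g '' {x | f x ≤ (⨅ y, f y) + (ε : ℝ)}))) := by
  obtain ⟨Cf, hCf⟩ := hf
  obtain ⟨Cg, hCg⟩ := hg
  set m : ℝ := ⨅ y, f y with hmdef
  set L : ℝ := ⨆ ε : Set.Ioi (0 : ℝ), sInf (g '' {x | f x ≤ m + (ε : ℝ)}) with hLdef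
  have hCg0 : 0 ≤ Cg := le_trans (abs_nonneg _) (hCg (Classical.arbitrary X))
  have hfb : BddBelow (Set.range f) := ⟨-Cf, by rintro y ⟨x, rfl⟩; linarith [(abs_le.1 (hCf x)).1]⟩
  have hmle : ∀ x, m ≤ f x := fun x => ciInf_le hfb x
  have hSne : ∀ ε : ℝ, 0 < ε → ∃ x, f x ≤ m + ε := by
    intro ε hε
    obtain ⟨x, hx⟩ := exists_lt_of_ciInf_lt (show m < m + ε by linarith)
    exact ⟨x, hx.le⟩
  have hbddg : ∀ ε : ℝ, BddBelow (g '' {x | f x ≤ m + ε}) := by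
    intro ε
    exact ⟨-Cg, by rintro y ⟨x, _, rfl⟩; linarith [(abs_le.1 (hCg x)).1]⟩
  have hDleCg : ∀ ε : ℝ, 0 < ε → sInf (g '' {x | f x ≤ m + ε}) ≤ Cg := by
    intro ε hε
    obtain ⟨x, hx⟩ := hSne ε hε
    exact le_trans (csInf_le (hbddg ε) ⟨x, hx, rfl⟩) (abs_le.1 (hCg x)).2
  have hbddD : BddAbove (Set.range fun ε : Set.Ioi (0 : ℝ) =>
      sInf (g '' {x | f x ≤ m + (ε : ℝ)})) := by
    refine ⟨Cg, ?_⟩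
    rintro y ⟨⟨ε, hε⟩, rfl⟩
    exact hDleCg ε hε
  have hDL : ∀ ε : ℝ, 0 < ε → sInf (g '' {x | f x ≤ m + ε}) ≤ L := by
    intro ε hε
    rw [hLdef]
    exact le_ciSup hbddD ⟨ε, hε⟩
  have hexD : ∀ ε δ : ℝ, 0 < ε → 0 < δ →
      ∃ x, f x ≤ m + ε ∧ g x < sInf (g '' {x | f x ≤ m + ε}) + δ := by
    intro ε δ hε hδ
    obtain ⟨x0, hx0⟩ := hSne ε hε
    have hne : (g '' {x | f x ≤ m + ε}).Nonempty := ⟨g x0, x0, hx0, rfl⟩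
    obtain ⟨y, ⟨x, hxS, rfl⟩, hy⟩ :=
      exists_lt_of_csInf_lt hne (lt_add_of_pos_right _ hδ)
    exact ⟨x, hxS, hy⟩
  have hu_le : ∀ n x, |gseq n x - g x| ≤ ⨆ x, |gseq n x - g x| := by
    intro n x
    obtain ⟨Cn, hCn⟩ := hgseq n
    refine le_ciSup (f := fun x => |gseq n x - g x|) ⟨Cn + Cg, ?_⟩ x
    rintro y ⟨z, rfl⟩
    calc |gseq n z - g z| ≤ |gseq n z| + |g z| := abs_sub _ _
      _ ≤ Cn + Cg := add_le_add (hCn z) (hCg z)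
  rw [Metric.tendsto_nhds]
  intro δ' hδ'
  set δ : ℝ := δ' / 4 with hδdef
  have hδ : 0 < δ := by positivity
  obtain ⟨ε, hεpos, hεD⟩ : ∃ ε : ℝ, 0 < ε ∧ L - δ < sInf (g '' {x | f x ≤ m + ε}) := by
    have hlt : L - δ < ⨆ ε : Set.Ioi (0 : ℝ), sInf (g '' {x | f x ≤ m + (ε : ℝ)}) := by
      rw [← hLdef]; linarith
    obtain ⟨⟨ε, hε⟩, h⟩ := exists_lt_of_lt_ciSup hlt
    exact ⟨ε, hε, h⟩
  set K : ℝ := |L| + Cg + 5 * δ + 1 with hKdef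
  have hK : 0 < K := by positivity
  have hEu : ∀ᶠ n in atTop, (⨆ x, |gseq n x - g x|) < δ := hconv.eventually_lt_const hδ
  have hEt : ∀ᶠ n in atTop, t n < ε / K := ht0.eventually_lt_const (by positivity)
  filter_upwards [hEu, hEt] with n hun htn
  have htn0 := ht n
  obtain ⟨Cn, hCn⟩ := hgseq n
  have hub : BddBelow (Set.range fun x => f x + t n * gseq n x) := by
    refine ⟨-Cf - t n * Cn, ?_⟩
    rintro y ⟨x, rfl⟩
    have h1 := (abs_le.1 (hCf x)).1
    have h2 := (abs_le.1 (hCn x)).1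
    have h3 : t n * (-Cn) ≤ t n * gseq n x := mul_le_mul_of_nonneg_left h2 (ht n).le
    show -Cf - t n * Cn ≤ f x + t n * gseq n x
    linarith
  have hu0n : 0 ≤ ⨆ x, |gseq n x - g x| :=
    le_trans (abs_nonneg _) (hu_le n (Classical.arbitrary X))
  -- Upper bound
  obtain ⟨x₁, hx₁S, hx₁g⟩ := hexD (δ * t n) δ (by positivity) hδ
  have hI_le : (⨅ x, (f x + t n * gseq n x)) ≤ f x₁ + t n * gseq n x₁ := ciInf_le hub x₁
  have hab1 := abs_sub_le_iff.1 (hu_le n x₁)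
  have hDle : sInf (g '' {x | f x ≤ m + δ * t n}) ≤ L := hDL _ (by positivity)
  have hmul1 : t n * gseq n x₁ ≤ t n * (L + 2 * δ) := by
    refine mul_le_mul_of_nonneg_left ?_ htn0.le
    linarith [hab1.1]
  have hIub : (⨅ x, (f x + t n * gseq n x)) - m ≤ t n * (L + 3 * δ) := by
    linarith [hI_le, hx₁S, hmul1]
  -- Lower bound
  obtain ⟨x₂, hx₂⟩ := exists_lt_of_ciInf_lt
    (show (⨅ x, (f x + t n * gseq n x)) < (⨅ x, (f x + t n * gseq n x)) + δ * t n by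
      have := mul_pos hδ htn0; linarith)
  have hab2 := abs_sub_le_iff.1 (hu_le n x₂)
  have hgx2lb : -Cg - (⨆ x, |gseq n x - g x|) ≤ gseq n x₂ := by
    linarith [(abs_le.1 (hCg x₂)).1, hab2.2]
  have hfx2 : f x₂ ≤ m + ε := by
    have hmul2 : t n * (-Cg - δ) ≤ t n * gseq n x₂ :=
      mul_le_mul_of_nonneg_left (by linarith) htn0.le
    have htK : t n * K < ε := by
      rw [lt_div_iff₀ hK] at htn
      exact htn
    have hmulL : t n * L ≤ t n * |L| := mul_le_mul_of_nonneg_left (le_abs_self L) htn0.le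
    have hKexp : t n * K = t n * |L| + t n * Cg + 5 * (t n * δ) + t n := by
      rw [hKdef]; ring
    linarith [hx₂, hIub, hmul2, htK, hmulL, htn0]
  have hDε : sInf (g '' {x | f x ≤ m + ε}) ≤ g x₂ := csInf_le (hbddg ε) ⟨x₂, hfx2, rfl⟩
  have hIlb : t n * (L - 3 * δ) ≤ (⨅ x, (f x + t n * gseq n x)) - m := by
    have hgseq2 : L - 2 * δ ≤ gseq n x₂ := by linarith [hab2.2]
    have hmul3 : t n * (L - 2 * δ) ≤ t n * gseq n x₂ :=
      mul_le_mul_of_nonneg_left hgseq2 htn0.le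
    linarith [hx₂, hmle x₂, hmul3]
  have hq1 : ((⨅ x, (f x + t n * gseq n x)) - m) / t n ≤ L + 3 * δ :=
    (div_le_iff₀ htn0).2 (by linarith [hIub])
  have hq2 : L - 3 * δ ≤ ((⨅ x, (f x + t n * gseq n x)) - m) / t n :=
    (le_div_iff₀ htn0).2 (by linarith [hIlb])
  rw [Real.dist_eq, abs_lt]
  constructor <;> · simp only [hδdef] at hq1 hq2 ⊢; linarith
end

section
/- Let (Ω, ℱ, P) be a probability space, d ≥ 1, X a nonempty subset of Euclidean space ℝ^d, and f : X → ℝ a bounded function with ψ* = inf_{x∈X} f(x). Assume S⁰ = {x ∈ X : f(x) = ψ*} is nonempty and f satisfies the sharp-growth inequality of order κ ≥ 1 with constant α > 0: f(x) − ψ* ≥ α·dist(x, S⁰)^κ for all x ∈ X. For each n let f̂_n(ω) : X → ℝ be bounded for every ω, with Δ_n(ω) = sup_{x∈X}|f̂_n(ω)(x) − f(x)| and ψ̂_n(ω) = inf_{x∈X} f̂_n(ω)(x). Let (r_n), (δ_n) be sequences of positive and nonnegative reals with limsup_n δ_n/r_n < ∞, let x̂_n : Ω → X, and let (A_N) be increasing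 measurable events with P(⋃_N A_N) = 1 such that f̂_n(ω)(x̂_n(ω)) ≤ ψ̂_n(ω) + δ_n for all ω ∈ A_N and n ≥ N. If for P-almost every ω, limsup_n Δ_n(ω)/r_n < ∞, then for P-almost every ω, limsup_{n→∞} dist(x̂_n(ω), S⁰)/r_n^{1/κ} < ∞. -/
open MeasureTheory Filter Topology

/-- Outer almost-sure solution-set localization rate under sharp growth and the
empirical minimizer membership assumption: if almost surely `limsup Δ_n/r_n < ∞`,
then almost surely `limsup dist(xh_n, S⁰)/r_n^{1/κ} < ∞`. -/
theorem as_distance_rate_transfer {Ω : Type*} [MeasurableSpace Ω]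
    (P : Measure Ω) [IsProbabilityMeasure P]
    {d : ℕ} (hd : 1 ≤ d) (X : Set (EuclideanSpace ℝ (Fin d))) (hX : X.Nonempty)
    (f : X → ℝ) (hf : ∃ C, ∀ x, |f x| ≤ C)
    (κ α : ℝ) (hκ : 1 ≤ κ) (hα : 0 < α)
    (hS : {x : X | f x = ⨅ y, f y}.Nonempty)
    (growth : ∀ x : X,
      α * Metric.infDist x {y : X | f y = ⨅ z, f z} ^ κ ≤ f x - ⨅ y, f y)
    (fhat : ℕ → Ω → X → ℝ) (hfhat : ∀ n ω, ∃ C, ∀ x, |fhat n ω x| ≤ C)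
    (r : ℕ → ℝ) (hr : ∀ n, 0 < r n)
    (δ : ℕ → ℝ) (hδ : ∀ n, 0 ≤ δ n)
    (hδr : IsBoundedUnder (· ≤ ·) atTop (fun n => δ n / r n))
    (xhat : ℕ → Ω → X) (A : ℕ → Set Ω)
    (hAmeas : ∀ N, MeasurableSet (A N)) (hAmono : Monotone A)
    (hAfull : P (⋃ N, A N) = 1)
    (hmem : ∀ N, ∀ ω ∈ A N, ∀ n, N ≤ n →
      fhat n ω (xhat n ω) ≤ (⨅ x, fhat n ω x) + δ n)
    (hΔ : ∀ᵐ ω ∂P, IsBoundedUnder (· ≤ ·) atTop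
      (fun n => (⨆ x, |fhat n ω x - f x|) / r n)) :
    ∀ᵐ ω ∂P, IsBoundedUnder (· ≤ ·) atTop
      (fun n => Metric.infDist (xhat n ω) {y : X | f y = ⨅ z, f z} / r n ^ (1 / κ)) := by

  haveI : Nonempty X := hX.to_subtype
  obtain ⟨C, hC⟩ := hf
  obtain ⟨x₀, hx₀⟩ := hS
  obtain ⟨D, hD⟩ := hδr
  rw [eventually_map] at hD
  have hκ0 : (0:ℝ) < κ := lt_of_lt_of_le one_pos hκ
  have hGmeas : MeasurableSet (⋃ N, A N) := MeasurableSet.iUnion hAmeas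
  have hGae : ∀ᵐ ω ∂P, ω ∈ ⋃ N, A N := by
    rw [ae_iff]
    have : {ω | ¬ ω ∈ ⋃ N, A N} = (⋃ N, A N)ᶜ := rfl
    rw [this, prob_compl_eq_zero_iff hGmeas]
    exact hAfull
  filter_upwards [hΔ, hGae] with ω hΔω hGω
  obtain ⟨N, hN⟩ := Set.mem_iUnion.mp hGω
  obtain ⟨M, hM⟩ := hΔω
  rw [eventually_map] at hM
  set S : Set X := {y : X | f y = ⨅ z, f z} with hSdef
  set K : ℝ := max ((2 * M + D) / α) 0 with hK
  refine ⟨K ^ (1 / κ), ?_⟩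
  rw [eventually_map]
  filter_upwards [hM, hD, eventually_ge_atTop N] with n hMn hDn hNn
  obtain ⟨C1, hC1⟩ := hfhat n ω
  have hBdd : BddAbove (Set.range fun x => |fhat n ω x - f x|) := by
    refine ⟨C1 + C, ?_⟩
    rintro _ ⟨x, rfl⟩
    calc |fhat n ω x - f x| ≤ |fhat n ω x| + |f x| := abs_sub _ _
      _ ≤ C1 + C := add_le_add (hC1 x) (hC x)
  set Δ : ℝ := ⨆ x, |fhat n ω x - f x| with hΔdef
  have hΔle : ∀ x, |fhat n ω x - f x| ≤ Δ := fun x => le_ciSup hBdd x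
  have hΔ0 : 0 ≤ Δ := le_trans (abs_nonneg _) (hΔle x₀)
  set xh : X := xhat n ω with hxhat
  have h1 : fhat n ω xh ≤ (⨅ x, fhat n ω x) + δ n := hmem N ω hN n hNn
  have h2 : (⨅ x, fhat n ω x) ≤ fhat n ω x₀ := by
    refine ciInf_le ⟨-C1, ?_⟩ x₀
    rintro _ ⟨x, rfl⟩
    exact neg_le_of_abs_le (hC1 x)
  have h3 : f xh ≤ fhat n ω xh + Δ := by
    have := hΔle xh
    have h := abs_le.mp this
    linarith [h.1]
  have h4 : fhat n ω x₀ ≤ f x₀ + Δ := by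
    have h := abs_le.mp (hΔle x₀)
    linarith [h.2]
  have hψ : f x₀ = ⨅ y, f y := hx₀
  have hkey : f xh - (⨅ y, f y) ≤ 2 * Δ + δ n := by
    rw [← hψ]; linarith
  have hgr := growth xh
  have hdn0 : 0 ≤ Metric.infDist xh S := Metric.infDist_nonneg
  have hΔr : Δ ≤ M * r n := by
    rw [div_le_iff₀ (hr n)] at hMn
    linarith [hMn]
  have hδrn : δ n ≤ D * r n := by
    rw [div_le_iff₀ (hr n)] at hDn
    linarith [hDn]
  have hpow : Metric.infDist xh S ^ κ ≤ K * r n := by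
    have h5 : α * Metric.infDist xh S ^ κ ≤ (2 * M + D) * r n := by
      calc α * Metric.infDist xh S ^ κ ≤ f xh - ⨅ y, f y := hgr
        _ ≤ 2 * Δ + δ n := hkey
        _ ≤ 2 * (M * r n) + D * r n := by linarith
        _ = (2 * M + D) * r n := by ring
    have h6 : Metric.infDist xh S ^ κ ≤ ((2 * M + D) / α) * r n := by
      rw [div_mul_eq_mul_div, le_div_iff₀ hα, mul_comm]
      linarith
    calc Metric.infDist xh S ^ κ ≤ ((2 * M + D) / α) * r n := h6
      _ ≤ K * r n := by
          apply mul_le_mul_of_nonneg_right (le_max_left _ _) (le_of_lt (hr n))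
  have hK0 : 0 ≤ K := le_max_right _ _
  have hd1 : Metric.infDist xh S ≤ (K * r n) ^ (1 / κ) := by
    have h := Real.rpow_le_rpow (Real.rpow_nonneg hdn0 κ) hpow (by positivity : (0:ℝ) ≤ 1/κ)
    rwa [← Real.rpow_mul hdn0, mul_one_div, div_self hκ0.ne', Real.rpow_one] at h
  have hsplit : (K * r n) ^ (1 / κ) = K ^ (1 / κ) * r n ^ (1 / κ) :=
    Real.mul_rpow hK0 (hr n).le
  rw [div_le_iff₀ (Real.rpow_pos_of_pos (hr n) (1 / κ))]
  rw [hsplit] at hd1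
  exact hd1
end

section
/- Let (Ω, ℱ, P) be a probability space, d ≥ 1, X a nonempty subset of Euclidean space ℝ^d, and f : X → ℝ a bounded function with ψ* = inf_{x∈X} f(x) and B_f = sup_{x∈X} f(x) − ψ*. Assume S⁰ = {x ∈ X : f(x) = ψ*} is nonempty and f(x) − ψ* ≥ α·dist(x, S⁰)^κ for all x ∈ X, with α > 0 and κ ≥ 1. Let f̂(ω) : X → ℝ be bounded for every ω, with Δ(ω) = sup_{x∈X}|f̂(ω)(x) − f(x)| and ψ̂(ω) = inf_{x∈X} f̂(ω)(x). Let δ ≥ 0, x̂ : Ω → X, and A ∈ ℱ such that f̂(ω)(x̂(ω)) ≤ ψ̂(ω) + δ for every ω ∈ A. Assume ω ↦ dist(x̂(ω), S⁰) is measurable and ω ↦ Δ(ω) is measurable and integrable. Then ∫_Ω dist(x̂(ω), S⁰)^κ dP(ω) ≤ α⁻¹·(2∫_Ω Δ(ω) dP(ω) + δ + B_f·P(Aᶜ)). -/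
open MeasureTheory

/-- Outer-mean solution-set localization under sharp growth: if `x̂` is an
empirical `δ`-minimizer on the event `A` and `f` satisfies sharp growth of order
`κ ≥ 1` with constant `α > 0`, then
`∫ dist(x̂, S⁰)^κ ≤ α⁻¹ (2 ∫ Δ + δ + B_f · P(Aᶜ))`. -/
theorem mean_distance_transfer {Ω : Type*} [MeasurableSpace Ω]
    (P : Measure Ω) [IsProbabilityMeasure P]
    {d : ℕ} (hd : 1 ≤ d) (X : Set (EuclideanSpace ℝ (Fin d))) (hX : X.Nonempty)
    (f : X → ℝ) (hf : ∃ C, ∀ x, |f x| ≤ C)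
    (κ α : ℝ) (hκ : 1 ≤ κ) (hα : 0 < α)
    (hS : {x : X | f x = ⨅ y, f y}.Nonempty)
    (growth : ∀ x : X,
      α * Metric.infDist x {y : X | f y = ⨅ z, f z} ^ κ ≤ f x - ⨅ y, f y)
    (fhat : Ω → X → ℝ) (hfhat : ∀ ω, ∃ C, ∀ x, |fhat ω x| ≤ C)
    (δ : ℝ) (hδ : 0 ≤ δ) (xhat : Ω → X) (A : Set Ω) (hA : MeasurableSet A)
    (hmem : ∀ ω ∈ A, fhat ω (xhat ω) ≤ (⨅ x, fhat ω x) + δ)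
    (hdistmeas : Measurable fun ω =>
      Metric.infDist (xhat ω) {y : X | f y = ⨅ z, f z})
    (hΔmeas : Measurable fun ω => ⨆ x, |fhat ω x - f x|)
    (hΔint : Integrable (fun ω => ⨆ x, |fhat ω x - f x|) P) :
    ∫ ω, Metric.infDist (xhat ω) {y : X | f y = ⨅ z, f z} ^ κ ∂P ≤
      α⁻¹ * (2 * ∫ ω, (⨆ x, |fhat ω x - f x|) ∂P + δ +
        ((⨆ x, f x) - ⨅ x, f x) * (P Aᶜ).toReal) := by
  have hNe : Nonempty X := hX.to_subtype
  obtain ⟨C, hC⟩ := hf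
  set S : Set X := {y : X | f y = ⨅ z, f z} with hSdef
  set ψ : ℝ := ⨅ z, f z with hψdef
  set Δ : Ω → ℝ := fun ω => ⨆ x, |fhat ω x - f x| with hΔdef
  set B : ℝ := (⨆ x, f x) - ψ with hBdef
  have hbddA : BddAbove (Set.range f) := ⟨C, by rintro _ ⟨x, rfl⟩; exact (abs_le.1 (hC x)).2⟩
  have hbddB : BddBelow (Set.range f) := ⟨-C, by rintro _ ⟨x, rfl⟩; exact (abs_le.1 (hC x)).1⟩
  have hψ_le : ∀ x, ψ ≤ f x := fun x => ciInf_le hbddB x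
  have hfsup : ∀ x, f x ≤ ⨆ y, f y := fun x => le_ciSup hbddA x
  obtain ⟨xstar, hxstar⟩ := hS
  have hB0 : 0 ≤ B := sub_nonneg.2 (le_trans (hψ_le xstar) (hfsup xstar))
  have hΔbdd : ∀ ω, BddAbove (Set.range fun x => |fhat ω x - f x|) := by
    intro ω
    obtain ⟨D, hD⟩ := hfhat ω
    refine ⟨D + C, ?_⟩
    rintro _ ⟨x, rfl⟩
    exact (abs_sub (fhat ω x) (f x)).trans (add_le_add (hD x) (hC x))
  have hΔle : ∀ ω x, |fhat ω x - f x| ≤ Δ ω := fun ω x => le_ciSup (hΔbdd ω) x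
  have hΔ0 : ∀ ω, 0 ≤ Δ ω :=
    fun ω => le_trans (abs_nonneg _) (hΔle ω (Classical.arbitrary X))
  -- pointwise key bound
  set g : Ω → ℝ := fun ω => 2 * Δ ω + δ + Set.indicator Aᶜ (fun _ => B) ω with hgdef
  have hdist0 : ∀ ω, 0 ≤ Metric.infDist (xhat ω) S := fun ω => Metric.infDist_nonneg
  have hkey : ∀ ω, α * Metric.infDist (xhat ω) S ^ κ ≤ g ω := by
    intro ω
    by_cases hωA : ω ∈ A
    · have h1 : α * Metric.infDist (xhat ω) S ^ κ ≤ f (xhat ω) - ψ := growth (xhat ω)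
      have h2 : f (xhat ω) ≤ fhat ω (xhat ω) + Δ ω := by
        have := (abs_le.1 (hΔle ω (xhat ω))).1
        linarith [this]
      have h3 : fhat ω (xhat ω) ≤ (⨅ x, fhat ω x) + δ := hmem ω hωA
      have hbb : BddBelow (Set.range (fhat ω)) := by
        obtain ⟨D, hD⟩ := hfhat ω
        exact ⟨-D, by rintro _ ⟨x, rfl⟩; exact (abs_le.1 (hD x)).1⟩
      have h4 : (⨅ x, fhat ω x) ≤ fhat ω xstar := ciInf_le hbb xstar
      have h5 : fhat ω xstar ≤ f xstar + Δ ω := by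
        have := (abs_le.1 (hΔle ω xstar)).2
        linarith [this]
      have h6 : f xstar = ψ := hxstar
      have hind : Set.indicator Aᶜ (fun _ => B) ω = 0 :=
        Set.indicator_of_notMem (by simpa using hωA) _
      have : α * Metric.infDist (xhat ω) S ^ κ ≤ 2 * Δ ω + δ := by linarith
      simpa [hgdef, hind] using this
    · have h1 : α * Metric.infDist (xhat ω) S ^ κ ≤ f (xhat ω) - ψ := growth (xhat ω)
      have h2 : f (xhat ω) - ψ ≤ B := by
        have := hfsup (xhat ω); simp only [hBdef]; linarith
      have hind : Set.indicator Aᶜ (fun _ => B) ω = B :=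
        Set.indicator_of_mem (by simpa using hωA) _
      have hΔω := hΔ0 ω
      simp only [hgdef, hind]
      linarith
  -- integrability of dist^κ
  have hmeas : Measurable fun ω => Metric.infDist (xhat ω) S ^ κ :=
    (show Measurable fun t : ℝ => t ^ κ by measurability).comp hdistmeas
  have hbound : ∀ ω, ‖Metric.infDist (xhat ω) S ^ κ‖ ≤ α⁻¹ * B := by
    intro ω
    rw [Real.norm_eq_abs, abs_of_nonneg (Real.rpow_nonneg (hdist0 ω) κ)]
    have h1 := growth (xhat ω)
    have h2 : f (xhat ω) - ψ ≤ B := by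
      have := hfsup (xhat ω); simp only [hBdef]; linarith
    have h3 : α * Metric.infDist (xhat ω) S ^ κ ≤ B := h1.trans h2
    calc Metric.infDist (xhat ω) S ^ κ
        = α⁻¹ * (α * Metric.infDist (xhat ω) S ^ κ) := by
          field_simp
      _ ≤ α⁻¹ * B := mul_le_mul_of_nonneg_left h3 (inv_nonneg.2 hα.le)
  have hint : Integrable (fun ω => Metric.infDist (xhat ω) S ^ κ) P :=
    (integrable_const (α⁻¹ * B)).mono' hmeas.aestronglyMeasurable
      (Filter.Eventually.of_forall hbound)
  have hgint : Integrable g P := by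
    refine (((hΔint.const_mul 2).add (integrable_const δ)).add ?_)
    exact (integrable_const B).indicator hA.compl
  have hstep : α * ∫ ω, Metric.infDist (xhat ω) S ^ κ ∂P ≤ ∫ ω, g ω ∂P := by
    rw [← integral_const_mul]
    exact integral_mono (hint.const_mul α) hgint hkey
  have hgcalc : ∫ ω, g ω ∂P = 2 * (∫ ω, Δ ω ∂P) + δ + B * (P Aᶜ).toReal := by
    have e1 : ∫ ω, (2 * Δ ω + δ) + Aᶜ.indicator (fun _ => B) ω ∂P
        = (∫ ω, 2 * Δ ω + δ ∂P) + ∫ ω, Aᶜ.indicator (fun _ => B) ω ∂P :=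
      integral_add ((hΔint.const_mul 2).add (integrable_const δ))
        ((integrable_const B).indicator hA.compl)
    have e2 : ∫ ω, 2 * Δ ω + δ ∂P = (∫ ω, 2 * Δ ω ∂P) + ∫ _ω, δ ∂P :=
      integral_add (hΔint.const_mul 2) (integrable_const δ)
    have e3 : ∫ ω, Aᶜ.indicator (fun _ => B) ω ∂P = (P Aᶜ).toReal • B :=
      integral_indicator_const _ hA.compl
    simp only [hgdef, e1, e2, e3, integral_const, integral_const_mul,
      measure_univ, probReal_univ, ENNReal.toReal_one, one_smul, smul_eq_mul]
    ring
  have hfinal : α * ∫ ω, Metric.infDist (xhat ω) S ^ κ ∂P ≤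
      2 * (∫ ω, Δ ω ∂P) + δ + B * (P Aᶜ).toReal := hgcalc ▸ hstep
  exact (le_inv_mul_iff₀ hα).2 hfinal
end
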